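/- arXiv:1703.04113 — 2 statements merged into one kernel-verified Lean document; each statement's English description precedes it below -/
import Mathlib

section
/- Let Y ⊆ ℝ^d be compact and convex and M : ℝ^d → ℝ^d continuous. Then the solution set SOL(Y, M) = { y* ∈ Y : ⟨M(y*), y − y*⟩ ≥ 0 for all y ∈ Y } is nonempty and compact. -/
open RealInnerProductSpace Metric Set MeasureTheory ContinuousLinearMap Filter
open scoped Convolution

variable {d : ℕ}

noncomputable section
namespace BrouwerAux

variable {d : ℕ} (g : EuclideanSpace ℝ (Fin d) → EuclideanSpace ℝ (Fin d))

def w (x : EuclideanSpace ℝ (Fin d)) : EuclideanSpace ℝ (Fin d) := x - g x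
def bb (x : EuclideanSpace ℝ (Fin d)) : ℝ := ⟪x, w g x⟫
def nw (x : EuclideanSpace ℝ (Fin d)) : ℝ := ⟪w g x, w g x⟫
def disc (x : EuclideanSpace ℝ (Fin d)) : ℝ := bb g x ^ 2 + (1 - ⟪x, x⟫) * nw g x
def sc (x : EuclideanSpace ℝ (Fin d)) : ℝ := (-(bb g x) + Real.sqrt (disc g x)) / nw g x
def r (x : EuclideanSpace ℝ (Fin d)) : EuclideanSpace ℝ (Fin d) := x + sc g x • w g x
def U : Set (EuclideanSpace ℝ (Fin d)) := {x | w g x ≠ 0 ∧ 0 < disc g x}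

variable {g}

lemma inner_self_pos' {x : EuclideanSpace ℝ (Fin d)} (h : x ≠ 0) : 0 < ⟪x, x⟫ := by
  rw [real_inner_self_eq_norm_sq]
  exact pow_pos (norm_pos_iff.2 h) 2

lemma nw_pos {x : EuclideanSpace ℝ (Fin d)} (hx : x ∈ U g) : 0 < nw g x :=
  inner_self_pos' hx.1

lemma isOpen_U (hg : Continuous g) : IsOpen (U g) := by
  have hw : Continuous (w g) := continuous_id.sub hg
  have hdisc : Continuous (disc g) := by
    apply Continuous.add
    · exact ((continuous_id.inner hw).pow 2)
    · exact (continuous_const.sub (continuous_id.inner continuous_id)).mul (hw.inner hw)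
  exact (isOpen_compl_singleton.preimage hw).inter (isOpen_lt continuous_const hdisc)

lemma norm_r {x : EuclideanSpace ℝ (Fin d)} (hx : x ∈ U g) : ‖r g x‖ = 1 := by
  have hnw := nw_pos hx
  have hd := hx.2
  have hq : Real.sqrt (disc g x) ^ 2 = disc g x := Real.sq_sqrt hd.le
  have hww : nw g x = ‖w g x‖ ^ 2 := real_inner_self_eq_norm_sq _
  have hsq : ‖r g x‖ ^ 2 = ⟪x, x⟫ + 2 * (sc g x * bb g x) + sc g x ^ 2 * nw g x := by
    rw [r, @norm_add_sq_real, real_inner_smul_right, norm_smul, mul_pow, Real.norm_eq_abs,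
      sq_abs, real_inner_self_eq_norm_sq, ← hww, bb]
    try ring
  have hgen : ∀ β n q xx : ℝ, n ≠ 0 → q ^ 2 = β ^ 2 + (1 - xx) * n →
      ((-β + q) / n) ^ 2 * n + 2 * ((-β + q) / n * β) = 1 - xx := by
    intro β n q xx hn hq2
    field_simp
    nlinarith [hq2]
  have hkey : sc g x ^ 2 * nw g x + 2 * (sc g x * bb g x) = 1 - ⟪x, x⟫ := by
    rw [sc]
    exact hgen _ _ _ _ hnw.ne' (by rw [hq, disc])
  have h1 : ‖r g x‖ ^ 2 = 1 := by rw [hsq]; linarith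
  have h9 : (‖r g x‖ - 1) * (‖r g x‖ + 1) = 0 := by nlinarith
  rcases mul_eq_zero.1 h9 with h | h
  · linarith
  · nlinarith [norm_nonneg (r g x)]

lemma inner_self_eq_one {x : EuclideanSpace ℝ (Fin d)} (hx : ‖x‖ = 1) : ⟪x, x⟫ = (1:ℝ) := by
  rw [real_inner_self_eq_norm_sq, hx]; norm_num

lemma r_eq_self {x : EuclideanSpace ℝ (Fin d)} (hx : ‖x‖ = 1) (hb : 0 < bb g x) :
    r g x = x := by
  have hd : disc g x = bb g x ^ 2 := by rw [disc, inner_self_eq_one hx]; ring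
  have : sc g x = 0 := by
    rw [sc, hd, Real.sqrt_sq hb.le]
    simp
  rw [r, this, zero_smul, add_zero]

lemma bb_pos_sphere {x : EuclideanSpace ℝ (Fin d)} (hmap : ‖g x‖ ≤ 1) (hne : g x ≠ x)
    (hx : ‖x‖ = 1) : 0 < bb g x := by
  have h1 : ⟪x, g x⟫ ≤ ‖x‖ * ‖g x‖ := real_inner_le_norm x (g x)
  have hbb : bb g x = 1 - ⟪x, g x⟫ := by
    rw [bb, w, inner_sub_right, inner_self_eq_one hx]
  have h2 : ⟪x, g x⟫ ≤ 1 := by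
    calc ⟪x, g x⟫ ≤ ‖x‖ * ‖g x‖ := h1
      _ ≤ 1 := by rw [hx, one_mul]; exact hmap
  rcases lt_or_eq_of_le h2 with h | h
  · rw [hbb]; linarith
  · exfalso
    have hgn : ‖g x‖ = 1 := by
      by_contra hgn
      have : ‖g x‖ < 1 := lt_of_le_of_ne hmap hgn
      have : ‖x‖ * ‖g x‖ < 1 := by rw [hx, one_mul]; exact this
      linarith
    have : ⟪x, g x⟫ = ‖x‖ * ‖g x‖ := by rw [hx, hgn, one_mul]; exact h
    have heq := inner_eq_norm_mul_iff_real.1 this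
    rw [hx, hgn, one_smul, one_smul] at heq
    exact hne heq.symm

lemma ball_subset_U (hmap : ∀ x, ‖x‖ ≤ 1 → ‖g x‖ ≤ 1)
    (hfix : ∀ x, ‖x‖ ≤ 1 → g x ≠ x) :
    closedBall (0 : EuclideanSpace ℝ (Fin d)) 1 ⊆ U g := by
  intro x hx
  rw [mem_closedBall, dist_zero_right] at hx
  have hw : w g x ≠ 0 := by
    rw [w, sub_ne_zero]
    exact fun h => hfix x hx h.symm
  refine ⟨hw, ?_⟩
  rcases lt_or_eq_of_le hx with h | h
  · have h1 : 0 < (1 - ⟪x, x⟫) * nw g x := by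
      apply mul_pos
      · rw [real_inner_self_eq_norm_sq]; nlinarith [norm_nonneg x]
      · exact inner_self_pos' hw
    rw [disc]; nlinarith [sq_nonneg (bb g x)]
  · have hb := bb_pos_sphere (hmap x hx) (hfix x hx) h
    rw [disc, inner_self_eq_one h]
    nlinarith

lemma contDiffAt_r (hg : ContDiff ℝ 1 g) {x : EuclideanSpace ℝ (Fin d)} (hx : x ∈ U g) :
    ContDiffAt ℝ 1 (r g) x := by
  have hw : ContDiff ℝ 1 (w g) := contDiff_id.sub hg
  have hwa : ContDiffAt ℝ 1 (w g) x := hw.contDiffAt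
  have hbb : ContDiffAt ℝ 1 (bb g) x := ContDiffAt.inner ℝ contDiffAt_id hwa
  have hnw : ContDiffAt ℝ 1 (nw g) x := ContDiffAt.inner ℝ hwa hwa
  have hdisc : ContDiffAt ℝ 1 (disc g) x :=
    (hbb.pow 2).add (((contDiffAt_const).sub (ContDiffAt.inner ℝ contDiffAt_id contDiffAt_id)).mul hnw)
  have hsqrt : ContDiffAt ℝ 1 (fun y => Real.sqrt (disc g y)) x :=
    hdisc.sqrt hx.2.ne'
  have hsc : ContDiffAt ℝ 1 (sc g) x := by
    apply ContDiffAt.div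
    · exact hbb.neg.add hsqrt
    · exact hnw
    · exact (nw_pos hx).ne'
  exact contDiffAt_id.add (hsc.smul hwa)

lemma det_fderiv_r_eq_zero (hg : ContDiff ℝ 1 g) (hUo : IsOpen (U g))
    {x : EuclideanSpace ℝ (Fin d)} (hx : x ∈ U g) :
    (fderiv ℝ (r g) x).det = 0 := by
  set Dr := fderiv ℝ (r g) x with hDr
  have hdiff : HasFDerivAt (r g) Dr x :=
    ((contDiffAt_r hg hx).differentiableAt one_ne_zero).hasFDerivAt
  -- the function y ↦ ⟪r y, r y⟫ is constant 1 on U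
  have hconst : (fun y => ⟪r g y, r g y⟫) =ᶠ[nhds x] (fun _ => (1:ℝ)) := by
    filter_upwards [hUo.mem_nhds hx] with y hy
    rw [real_inner_self_eq_norm_sq, norm_r hy]; norm_num
  have hfd : HasFDerivAt (fun y => ⟪r g y, r g y⟫)
      ((fderivInnerCLM ℝ (r g x, r g x)).comp (Dr.prod Dr)) x := hdiff.inner ℝ hdiff
  have hzero : (fderivInnerCLM ℝ (r g x, r g x)).comp (Dr.prod Dr) = 0 := by
    rw [← hfd.fderiv, hconst.fderiv_eq]
    simp
  have horth : ∀ v, ⟪r g x, Dr v⟫ = 0 := by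
    intro v
    have h0 := congrFun (congrArg DFunLike.coe hzero) v
    simp only [ContinuousLinearMap.comp_apply, ContinuousLinearMap.prod_apply,
      fderivInnerCLM_apply, ContinuousLinearMap.zero_apply] at h0
    have : ⟪r g x, Dr v⟫ + ⟪Dr v, r g x⟫ = 0 := h0
    rw [real_inner_comm (Dr v)] at this
    linarith
  by_contra hdet
  have hsurj : Function.Surjective Dr := by
    intro y
    obtain ⟨v, hv⟩ := (LinearMap.equivOfDetNeZero Dr.toLinearMap hdet).surjective y
    exact ⟨v, by simpa using hv⟩
  obtain ⟨v, hv⟩ := hsurj (r g x)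
  have h1 := horth v
  rw [hv] at h1
  rw [real_inner_self_eq_norm_sq, norm_r hx] at h1
  norm_num at h1


open MeasureTheory Filter

-- determinant expansion
lemma det_expand (N : Matrix (Fin d) (Fin d) ℝ) (t : ℝ) :
    (1 + t • N).det = ∑ σ : Equiv.Perm (Fin d), ∑ S ∈ Finset.univ.powerset,
      (((Equiv.Perm.sign σ : ℤ) : ℝ) * (∏ i ∈ Finset.univ \ S, (1 : Matrix (Fin d) (Fin d) ℝ) (σ i) i)
        * t ^ S.card) * ∏ i ∈ S, N (σ i) i := by
  rw [Matrix.det_apply']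
  apply Finset.sum_congr rfl
  intro σ _
  have h1 : ∀ i ∈ Finset.univ, (1 + t • N) (σ i) i
      = t * N (σ i) i + (1 : Matrix (Fin d) (Fin d) ℝ) (σ i) i := by
    intro i _
    simp only [Matrix.add_apply, Matrix.smul_apply, smul_eq_mul]
    ring
  rw [Finset.prod_congr rfl h1, Finset.prod_add, Finset.mul_sum]
  apply Finset.sum_congr rfl
  intro S hS
  rw [Finset.prod_mul_distrib, Finset.prod_const]
  ring

variable (g)

set_option maxHeartbeats 2000000 in
theorem brouwer_smooth_aux (hg : ContDiff ℝ 1 g)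
    (hmap : ∀ x, ‖x‖ ≤ 1 → ‖g x‖ ≤ 1) :
    ∃ x, ‖x‖ ≤ 1 ∧ g x = x := by
  by_contra hcon
  push_neg at hcon
  rcases subsingleton_or_nontrivial (EuclideanSpace ℝ (Fin d)) with hsub | hnt
  · exact hcon 0 (by simp) (Subsingleton.elim _ _)
  have hfix : ∀ x : EuclideanSpace ℝ (Fin d), ‖x‖ ≤ 1 → g x ≠ x := hcon
  set B := closedBall (0 : EuclideanSpace ℝ (Fin d)) 1 with hBdef
  have hBc : IsCompact B := isCompact_closedBall _ _
  have hBconv : Convex ℝ B := convex_closedBall _ _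
  have hBU : B ⊆ U g := ball_subset_U hmap hfix
  have hUo : IsOpen (U g) := isOpen_U hg.continuous
  have hrCD : ContDiffOn ℝ 1 (r g) (U g) := fun x hx => (contDiffAt_r hg hx).contDiffWithinAt
  have hrC : ContinuousOn (r g) (U g) := hrCD.continuousOn
  have hDrc : ContinuousOn (fderiv ℝ (r g)) (U g) :=
    hrCD.continuousOn_fderiv_of_isOpen hUo le_rfl
  set A : EuclideanSpace ℝ (Fin d) → (EuclideanSpace ℝ (Fin d) →L[ℝ] EuclideanSpace ℝ (Fin d)) :=
    fun x => fderiv ℝ (r g) x - ContinuousLinearMap.id ℝ _ with hA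
  have hAc : ContinuousOn A (U g) := hDrc.sub continuousOn_const
  obtain ⟨C, hC⟩ := hBc.exists_bound_of_continuousOn (hAc.mono hBU)
  have hC0 : 0 ≤ C := le_trans (norm_nonneg _) (hC 0 (mem_closedBall_self zero_le_one))
  set t₀ : ℝ := min (1/2) (1/(2*(C+1))) with ht₀def
  have ht₀pos : 0 < t₀ := lt_min (by norm_num) (by positivity)
  have ht₀half : t₀ ≤ 1/2 := min_le_left _ _
  have ht₀C : t₀ * C < 1 := by
    have h1 : t₀ ≤ 1/(2*(C+1)) := min_le_right _ _
    have h2 : t₀ * C ≤ (1/(2*(C+1))) * C := mul_le_mul_of_nonneg_right h1 hC0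
    have h3 : (1/(2*(C+1))) * C < 1 := by
      rw [div_mul_eq_mul_div, div_lt_one (by positivity)]
      nlinarith
    linarith
  have hrdiff : ∀ x ∈ U g, HasFDerivAt (r g) (fderiv ℝ (r g) x) x :=
    fun x hx => ((contDiffAt_r hg hx).differentiableAt one_ne_zero).hasFDerivAt
  set ft : ℝ → EuclideanSpace ℝ (Fin d) → EuclideanSpace ℝ (Fin d) :=
    fun t x => x + t • (r g x - x) with hftdef
  set D : ℝ → EuclideanSpace ℝ (Fin d) →
      (EuclideanSpace ℝ (Fin d) →L[ℝ] EuclideanSpace ℝ (Fin d)) :=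
    fun t x => ContinuousLinearMap.id ℝ _ + t • A x with hDdef
  have hsubderiv : ∀ x ∈ U g, HasFDerivAt (fun y => r g y - y) (A x) x :=
    fun x hx => (hrdiff x hx).sub (hasFDerivAt_id x)
  have hftderiv : ∀ (t : ℝ), ∀ x ∈ U g, HasFDerivAt (ft t) (D t x) x := by
    intro t x hx
    exact (hasFDerivAt_id x).add ((hsubderiv x hx).const_smul t)
  have hftc : ∀ t : ℝ, ContinuousOn (ft t) B := by
    intro t
    exact continuousOn_id.add
      (by have := (continuousOn_const : ContinuousOn (fun _ => t) B).smul (((hrC.mono hBU)).sub continuousOn_id); exact this)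
  have hlip : ∀ x ∈ B, ∀ y ∈ B, ‖(r g y - y) - (r g x - x)‖ ≤ C * ‖y - x‖ := by
    intro x hx y hy
    exact hBconv.norm_image_sub_le_of_norm_hasFDerivWithin_le
      (fun z hz => (hsubderiv z (hBU hz)).hasFDerivWithinAt)
      (fun z hz => hC z hz) hx hy
  have hinj : ∀ t ∈ Icc (0:ℝ) t₀, Set.InjOn (ft t) B := by
    intro t ht x hx y hy hxy
    by_contra hne
    have h1 : x - y = t • ((r g y - y) - (r g x - x)) := by
      have := hxy
      simp only [hftdef] at this
      have h2 : x - y = t • (r g y - y) - t • (r g x - x) := by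
        rw [show t • (r g y - y) - t • (r g x - x)
          = (y + t • (r g y - y)) - (x + t • (r g x - x)) + (x - y) by abel, ← this]
        abel
      rw [h2, ← smul_sub]
    have h2 : ‖x - y‖ ≤ t * (C * ‖y - x‖) := by
      rw [h1, norm_smul, Real.norm_eq_abs, abs_of_nonneg ht.1]
      exact mul_le_mul_of_nonneg_left (hlip x hx y hy) ht.1
    have h3 : 0 < ‖x - y‖ := norm_pos_iff.2 (sub_ne_zero.2 hne)
    have h4 : ‖y - x‖ = ‖x - y‖ := norm_sub_rev y x
    have h5 : t * C ≤ t₀ * C := mul_le_mul_of_nonneg_right ht.2 hC0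
    nlinarith
  have hmapsto : ∀ t ∈ Icc (0:ℝ) t₀, ∀ x ∈ B, ft t x ∈ B := by
    intro t ht x hx
    have hcomb : ft t x = (1 - t) • x + t • r g x := by
      simp only [hftdef]
      rw [sub_smul, one_smul, smul_sub]
      abel
    have hx1 : ‖x‖ ≤ 1 := by simpa [hBdef] using hx
    have ht1 : t ≤ 1 := le_trans ht.2 (by linarith)
    simp only [hBdef, mem_closedBall, dist_zero_right]
    rw [hcomb]
    calc ‖(1 - t) • x + t • r g x‖ ≤ ‖(1 - t) • x‖ + ‖t • r g x‖ := norm_add_le _ _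
      _ = (1 - t) * ‖x‖ + t * ‖r g x‖ := by
          rw [norm_smul, norm_smul, Real.norm_eq_abs, Real.norm_eq_abs,
            abs_of_nonneg (by linarith), abs_of_nonneg ht.1]
      _ ≤ (1 - t) * 1 + t * 1 := by
          have := norm_r (hBU hx)
          rw [this]
          exact add_le_add (mul_le_mul_of_nonneg_left hx1 (by linarith)) le_rfl
      _ = 1 := by ring
  -- matrices
  set bE := (EuclideanSpace.basisFun (Fin d) ℝ).toBasis with hbEdef
  set N : EuclideanSpace ℝ (Fin d) → Matrix (Fin d) (Fin d) ℝ :=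
    fun x => LinearMap.toMatrix bE bE (A x).toLinearMap with hNdef
  have hdetD : ∀ (t : ℝ) (x : EuclideanSpace ℝ (Fin d)),
      (D t x).det = (1 + t • N x).det := by
    intro t x
    have h1 : (D t x).toLinearMap
        = LinearMap.id + t • (A x).toLinearMap := by
      ext v
      simp [hDdef]
    show LinearMap.det (D t x).toLinearMap = _
    rw [h1, ← LinearMap.det_toMatrix bE, map_add, _root_.map_smul, LinearMap.toMatrix_id]
  have hNentry : ∀ x i j, N x i j = (A x) (bE j) i := by
    intro x i j
    show (LinearMap.toMatrix bE bE (A x).toLinearMap) i j = (A x) (bE j) i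
    rw [LinearMap.toMatrix_apply]
    simp [hbEdef, OrthonormalBasis.coe_toBasis_repr_apply, EuclideanSpace.basisFun_repr]
  have hNc : ∀ i j, ContinuousOn (fun x => N x i j) (U g) := by
    intro i j
    have h1 : ContinuousOn (fun x => (A x) (bE j) i) (U g) := by
      have h2 : Continuous fun (L : EuclideanSpace ℝ (Fin d) →L[ℝ] EuclideanSpace ℝ (Fin d)) =>
          (EuclideanSpace.proj i) (L (bE j)) :=
        (EuclideanSpace.proj i).continuous.comp
          (ContinuousLinearMap.apply ℝ (EuclideanSpace ℝ (Fin d)) (bE j)).continuous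
      exact h2.comp_continuousOn hAc
    have h3 : (fun x => N x i j) = fun x => (A x) (bE j) i := funext fun x => hNentry x i j
    rw [h3]
    exact h1
  -- invertibility for small t
  have hunit : ∀ t ∈ Icc (0:ℝ) t₀, ∀ x ∈ B, IsUnit (D t x) := by
    intro t ht x hx
    have hnorm : ‖-(t • A x)‖ < 1 := by
      rw [norm_neg]
      have h9 : ‖t • A x‖ = ‖t‖ * ‖A x‖ := norm_smul t (A x)
      rw [h9, Real.norm_eq_abs, abs_of_nonneg ht.1]
      calc t * ‖A x‖ ≤ t₀ * C :=
            mul_le_mul ht.2 (hC x hx) (norm_nonneg _) ht₀pos.le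
        _ < 1 := ht₀C
    have h2 : IsUnit ((1 : EuclideanSpace ℝ (Fin d) →L[ℝ] EuclideanSpace ℝ (Fin d))
        - (-(t • A x))) := ⟨Units.oneSub _ hnorm, rfl⟩
    have h3 : (1 : EuclideanSpace ℝ (Fin d) →L[ℝ] EuclideanSpace ℝ (Fin d))
        - (-(t • A x)) = D t x := by
      rw [sub_neg_eq_add]
      rfl
    rwa [h3] at h2
  have hdet_ne : ∀ t ∈ Icc (0:ℝ) t₀, ∀ x ∈ B, (D t x).det ≠ 0 := by
    intro t ht x hx
    have h1 : IsUnit ((D t x).toLinearMap) :=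
      (hunit t ht x hx).map (ContinuousLinearMap.toLinearMapRingHom)
    have h2 : IsUnit (LinearMap.det (D t x).toLinearMap) := h1.map LinearMap.det
    exact h2.ne_zero
  have hdetpos : ∀ t ∈ Icc (0:ℝ) t₀, ∀ x ∈ B, 0 < (D t x).det := by
    intro t ht x hx
    set φ : ℝ → ℝ := fun u => (1 + u • N x).det with hφdef
    have hφc : Continuous φ := by
      apply Continuous.matrix_det
      apply continuous_pi; intro i
      apply continuous_pi; intro j
      simp only [Matrix.add_apply, Matrix.smul_apply, smul_eq_mul]
      exact continuous_const.add (continuous_id.mul continuous_const)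
    have hφ0 : φ 0 = 1 := by simp [hφdef]
    have hφne : ∀ u ∈ Icc (0:ℝ) t, φ u ≠ 0 := by
      intro u hu
      have huIcc : u ∈ Icc (0:ℝ) t₀ := ⟨hu.1, le_trans hu.2 ht.2⟩
      have h8 := hdet_ne u huIcc x hx
      rwa [hdetD u x] at h8
    rw [hdetD t x]
    show 0 < φ t
    by_contra hle
    push_neg at hle
    have hlt : φ t < 0 := lt_of_le_of_ne hle (hφne t ⟨ht.1, le_refl t⟩)
    have h0mem : (0:ℝ) ∈ Icc (φ t) (φ 0) := ⟨hlt.le, by rw [hφ0]; norm_num⟩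
    obtain ⟨u, hu, hu0⟩ := intermediate_value_Icc' ht.1 hφc.continuousOn h0mem
    exact hφne u hu hu0
  -- f_t fixes the sphere
  have hsphere : ∀ (t : ℝ) (x : EuclideanSpace ℝ (Fin d)), ‖x‖ = 1 → ft t x = x := by
    intro t x hx1
    have hrx : r g x = x :=
      r_eq_self hx1 (bb_pos_sphere (hmap x hx1.le) (hfix x hx1.le) hx1)
    simp [hftdef, hrx]
  -- surjectivity of f_t on B for small t
  have hsurj : ∀ t ∈ Icc (0:ℝ) t₀, ft t '' B = B := by
    intro t ht
    have ht1 : t < 1 := lt_of_le_of_lt (le_trans ht.2 ht₀half) (by norm_num)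
    set Et := ft t '' (ball (0:EuclideanSpace ℝ (Fin d)) 1) with hEt
    have hftball : ∀ x ∈ ball (0:EuclideanSpace ℝ (Fin d)) 1,
        ft t x ∈ ball (0:EuclideanSpace ℝ (Fin d)) 1 := by
      intro x hx
      have hx1 : ‖x‖ < 1 := by simpa using hx
      have hxB : x ∈ B := ball_subset_closedBall hx
      have hcomb : ft t x = (1 - t) • x + t • r g x := by
        simp only [hftdef]
        rw [sub_smul, one_smul, smul_sub]
        abel
      simp only [mem_ball, dist_zero_right]
      rw [hcomb]
      calc ‖(1 - t) • x + t • r g x‖ ≤ ‖(1 - t) • x‖ + ‖t • r g x‖ := norm_add_le _ _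
        _ = (1 - t) * ‖x‖ + t * ‖r g x‖ := by
            rw [norm_smul, norm_smul, Real.norm_eq_abs, Real.norm_eq_abs,
              abs_of_nonneg (by linarith), abs_of_nonneg ht.1]
        _ < 1 := by
            rw [norm_r (hBU hxB)]
            nlinarith
    have hclosedim : closure Et ⊆ ft t '' B := by
      have h1 : Et ⊆ ft t '' B := image_mono ball_subset_closedBall
      have h2 : IsClosed (ft t '' B) := (hBc.image_of_continuousOn (hftc t)).isClosed
      exact h2.closure_subset_iff.2 h1
    have hmemEt : ∀ y ∈ ball (0:EuclideanSpace ℝ (Fin d)) 1, y ∈ closure Et → y ∈ Et := by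
      intro y hy hyc
      obtain ⟨x, hxB, hxy⟩ := hclosedim hyc
      rcases lt_or_eq_of_le (show ‖x‖ ≤ 1 by simpa [hBdef] using hxB) with h | h
      · exact ⟨x, by simpa using h, hxy⟩
      · exfalso
        rw [hsphere t x h] at hxy
        rw [← hxy] at hy
        simp only [mem_ball, dist_zero_right] at hy
        rw [h] at hy
        exact lt_irrefl 1 hy
    have hEtopen : IsOpen Et := by
      rw [isOpen_iff_mem_nhds]
      rintro y ⟨x, hxball, rfl⟩
      have hxU : x ∈ U g := hBU (ball_subset_closedBall hxball)
      have hcda : ContDiffAt ℝ 1 (ft t) x := by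
        exact contDiffAt_id.add
          (by have := (contDiffAt_const : ContDiffAt ℝ 1 (fun _ => t) x).smul ((contDiffAt_r hg hxU).sub contDiffAt_id); exact this)
      have hstrict : HasStrictFDerivAt (ft t) (D t x) x :=
        hcda.hasStrictFDerivAt' (hftderiv t x hxU) one_ne_zero
      have hrange : LinearMap.range (D t x : EuclideanSpace ℝ (Fin d) →ₗ[ℝ] EuclideanSpace ℝ (Fin d)) = ⊤ := by
        obtain ⟨u, hu⟩ := hunit t ht x (ball_subset_closedBall hxball)
        rw [LinearMap.range_eq_top]
        intro z
        refine ⟨(↑u⁻¹ : EuclideanSpace ℝ (Fin d) →L[ℝ] EuclideanSpace ℝ (Fin d)) z, ?_⟩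
        have h5 : (D t x) ∘ (↑u⁻¹ : EuclideanSpace ℝ (Fin d) →L[ℝ] EuclideanSpace ℝ (Fin d)) = _root_.id := by
          rw [← hu]; funext w; show ((↑u * ↑u⁻¹ : EuclideanSpace ℝ (Fin d) →L[ℝ] EuclideanSpace ℝ (Fin d))) w = w; rw [Units.mul_inv]
          rfl
        exact congrFun h5 z
      have hmapnhds := hstrict.map_nhds_eq_of_surj hrange
      rw [← hmapnhds]
      exact Filter.image_mem_map (isOpen_ball.mem_nhds hxball)
    have hsubset : ball (0:EuclideanSpace ℝ (Fin d)) 1 ⊆ Et := by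
      apply IsPreconnected.subset_left_of_subset_union hEtopen
        isClosed_closure.isOpen_compl
        (disjoint_compl_right.mono_left subset_closure)
        (fun y hy => (em (y ∈ closure Et)).elim (fun h => Or.inl (hmemEt y hy h)) Or.inr)
        ?_ (convex_ball (0:EuclideanSpace ℝ (Fin d)) 1).isPreconnected
      refine ⟨ft t 0, hftball 0 (mem_ball_self one_pos), mem_image_of_mem _ (mem_ball_self one_pos)⟩
    apply Set.Subset.antisymm
    · exact image_subset_iff.2 (fun x hx => hmapsto t ht x hx)
    · calc B = closure (ball (0:EuclideanSpace ℝ (Fin d)) 1) := (closure_ball 0 one_ne_zero).symm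
        _ ⊆ closure Et := closure_mono hsubset
        _ ⊆ ft t '' B := hclosedim
  classical
  have hmeasB : MeasurableSet B := measurableSet_closedBall
  -- change of variables
  have hchange : ∀ t ∈ Icc (0:ℝ) t₀,
      (∫⁻ x in B, ENNReal.ofReal ((D t x).det)) = volume B := by
    intro t ht
    have h1 := lintegral_abs_det_fderiv_eq_addHaar_image volume hmeasB
      (fun x hx => (hftderiv t x (hBU hx)).hasFDerivWithinAt) (hinj t ht)
    rw [hsurj t ht] at h1
    rw [← h1]
    apply setLIntegral_congr_fun hmeasB
    intro x hx
    simp only [abs_of_pos (hdetpos t ht x hx)]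
  set c1 : Equiv.Perm (Fin d) → Finset (Fin d) → ℝ :=
    fun σ S => ((Equiv.Perm.sign σ : ℤ) : ℝ)
      * (∏ i ∈ Finset.univ \ S, (1 : Matrix (Fin d) (Fin d) ℝ) (σ i) i) with hc1def
  have hNcB : ∀ i j : Fin d, ContinuousOn (fun x => N x i j) B :=
    fun i j => (hNc i j).mono hBU
  have hprodc : ∀ (σ : Equiv.Perm (Fin d)) (S : Finset (Fin d)),
      ContinuousOn (fun x => ∏ i ∈ S, N x (σ i) i) B := by
    intro σ S
    exact continuousOn_finset_prod S (fun i _ => hNcB (σ i) i)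
  have hint : ∀ (σ : Equiv.Perm (Fin d)) (S : Finset (Fin d)),
      IntegrableOn (fun x => ∏ i ∈ S, N x (σ i) i) B volume :=
    fun σ S => (hprodc σ S).integrableOn_compact hBc
  set P : Polynomial ℝ := ∑ σ : Equiv.Perm (Fin d), ∑ S ∈ Finset.univ.powerset,
    Polynomial.C (c1 σ S * ∫ x in B, ∏ i ∈ S, N x (σ i) i) * Polynomial.X ^ S.card with hPdef
  have hintterm : ∀ (t : ℝ) (σ : Equiv.Perm (Fin d)), ∀ S ∈ Finset.univ.powerset,
      Integrable (fun x => (c1 σ S * t ^ S.card) * ∏ i ∈ S, N x (σ i) i)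
        (volume.restrict B) :=
    fun t σ S _ => ((hint σ S).const_mul _)
  have hexp : ∀ (t : ℝ) (x : EuclideanSpace ℝ (Fin d)),
      (1 + t • N x).det = ∑ σ : Equiv.Perm (Fin d), ∑ S ∈ Finset.univ.powerset,
        (c1 σ S * t ^ S.card) * ∏ i ∈ S, N x (σ i) i := by
    intro t x
    rw [det_expand (N x) t]
  have heval : ∀ t : ℝ, P.eval t = ∫ x in B, (1 + t • N x).det := by
    intro t
    have h1 : ∫ x in B, (1 + t • N x).det
        = ∫ x in B, ∑ σ : Equiv.Perm (Fin d), ∑ S ∈ Finset.univ.powerset,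
            (c1 σ S * t ^ S.card) * ∏ i ∈ S, N x (σ i) i := by
      apply setIntegral_congr_fun hmeasB
      intro x _
      exact hexp t x
    rw [h1, integral_finset_sum]
    swap
    · exact fun σ _ => integrable_finset_sum _ (hintterm t σ)
    rw [hPdef]
    rw [Polynomial.eval_finset_sum]
    apply Finset.sum_congr rfl
    intro σ _
    rw [integral_finset_sum _ (hintterm t σ), Polynomial.eval_finset_sum]
    apply Finset.sum_congr rfl
    intro S _
    rw [integral_const_mul]
    simp only [Polynomial.eval_mul, Polynomial.eval_C, Polynomial.eval_pow, Polynomial.eval_X]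
    ring
  have hPt : ∀ t ∈ Icc (0:ℝ) t₀, ENNReal.ofReal (P.eval t) = volume B := by
    intro t ht
    rw [heval t]
    have hpos' : 0 ≤ᵐ[volume.restrict B] fun x => (1 + t • N x).det := by
      rw [EventuallyLE, ae_restrict_iff' hmeasB]
      apply Filter.Eventually.of_forall
      intro x hx
      have := hdetpos t ht x hx
      rw [hdetD t x] at this
      exact this.le
    have hintegrable : IntegrableOn (fun x => (1 + t • N x).det) B volume := by
      apply Integrable.congr (integrable_finset_sum _
        (fun σ _ => integrable_finset_sum _ (hintterm t σ)))
      apply Filter.Eventually.of_forall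
      intro x
      exact (hexp t x).symm
    rw [ofReal_integral_eq_lintegral_ofReal hintegrable hpos']
    rw [← hchange t ht]
    apply lintegral_congr
    intro x
    rw [hdetD t x]
  have hvol0 : volume B ≠ 0 := (measure_closedBall_pos volume (0:EuclideanSpace ℝ (Fin d)) one_pos).ne'
  have hvolfin : volume B ≠ ⊤ := hBc.measure_lt_top.ne
  set vB : ℝ := (volume B).toReal with hvBdef
  have hvBpos : 0 < vB := ENNReal.toReal_pos hvol0 hvolfin
  have hPconst : ∀ t ∈ Icc (0:ℝ) t₀, P.eval t = vB := by
    intro t ht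
    have h1 := hPt t ht
    rw [show volume B = ENNReal.ofReal vB by rw [hvBdef, ENNReal.ofReal_toReal hvolfin]] at h1
    rcases le_or_gt 0 (P.eval t) with h2 | h2
    · exact (ENNReal.ofReal_eq_ofReal_iff h2 hvBpos.le).1 h1
    · exfalso
      rw [ENNReal.ofReal_eq_zero.2 h2.le] at h1
      exact (ENNReal.ofReal_pos.2 hvBpos).ne' h1.symm
  have hPC : P = Polynomial.C vB := by
    have hProot : P - Polynomial.C vB = 0 := by
      apply Polynomial.eq_zero_of_infinite_isRoot
      apply Set.Infinite.mono ?_ (Set.Icc_infinite ht₀pos)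
      intro t ht
      simp only [Set.mem_setOf_eq, Polynomial.IsRoot, Polynomial.eval_sub, Polynomial.eval_C]
      rw [hPconst t ht, sub_self]
    exact sub_eq_zero.1 hProot
  have hP1 : P.eval 1 = vB := by rw [hPC, Polynomial.eval_C]
  have hP1' : P.eval 1 = 0 := by
    rw [heval 1]
    have hEq : Set.EqOn (fun x => (1 + (1:ℝ) • N x).det) (fun _ => (0:ℝ)) B := by
      intro x hx
      have h1 : (1 + (1:ℝ) • N x).det = (D 1 x).det := (hdetD 1 x).symm
      have h2 : D 1 x = fderiv ℝ (r g) x := by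
        show ContinuousLinearMap.id ℝ _ + (1:ℝ) • A x = fderiv ℝ (r g) x
        rw [one_smul]
        simp only [hA]
        abel
      show (1 + (1:ℝ) • N x).det = 0
      rw [h1, h2]
      exact det_fderiv_r_eq_zero hg hUo (hBU hx)
    rw [setIntegral_congr_fun hmeasB hEq]
    simp
  rw [hP1'] at hP1
  linarith

end BrouwerAux
end

theorem brouwer_ball (g : EuclideanSpace ℝ (Fin d) → EuclideanSpace ℝ (Fin d))
    (hg : Continuous g) (hmap : ∀ x, ‖x‖ ≤ 1 → ‖g x‖ ≤ 1) :
    ∃ x, ‖x‖ ≤ 1 ∧ g x = x := by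
  by_contra hcon
  push_neg at hcon
  -- minimum of ‖g x - x‖ on the closed ball
  have hBc : IsCompact (closedBall (0 : EuclideanSpace ℝ (Fin d)) 1) := isCompact_closedBall _ _
  obtain ⟨x₀, hx₀, hmin⟩ := hBc.exists_isMinOn ⟨0, mem_closedBall_self zero_le_one⟩
    ((hg.sub continuous_id).norm.continuousOn)
  set δ : ℝ := ‖g x₀ - x₀‖ with hδ
  have hδpos : 0 < δ := by
    rw [hδ, norm_pos_iff, sub_ne_zero]
    exact hcon x₀ (by simpa using hx₀)
  have hδle : ∀ x, ‖x‖ ≤ 1 → δ ≤ ‖g x - x‖ := by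
    intro x hx
    exact hmin (by simpa using hx)
  set ε : ℝ := δ / 3 with hε
  have hεpos : 0 < ε := by positivity
  -- uniform continuity on closedBall 0 2
  have hUC := (isCompact_closedBall (0 : EuclideanSpace ℝ (Fin d)) 2).uniformContinuousOn_of_continuous
    (hg.continuousOn)
  rw [Metric.uniformContinuousOn_iff] at hUC
  obtain ⟨η, hηpos, hη⟩ := hUC ε hεpos
  set η' : ℝ := min η 1 with hη'
  have hη'pos : 0 < η' := lt_min hηpos one_pos
  set φ : ContDiffBump (0 : EuclideanSpace ℝ (Fin d)) :=
    ⟨η' / 2, η', by positivity, by linarith [half_lt_self hη'pos]⟩ with hφ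
  set h : EuclideanSpace ℝ (Fin d) → EuclideanSpace ℝ (Fin d) :=
    φ.normed volume ⋆[lsmul ℝ ℝ, volume] g with hh
  have hgloc : LocallyIntegrable g volume := hg.locallyIntegrable
  have hsmooth : ContDiff ℝ 1 h :=
    φ.hasCompactSupport_normed.contDiff_convolution_left _ (φ.contDiff_normed (n := 1)) hgloc
  have happrox : ∀ x, ‖x‖ ≤ 1 → ‖h x - g x‖ ≤ ε := by
    intro x hx
    have : dist (h x) (g x) ≤ ε := by
      apply ContDiffBump.dist_normed_convolution_le hg.aestronglyMeasurable
      intro y hy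
      have hyx : dist y x < η' := by simpa [dist_comm] using hy
      rw [dist_eq_norm]
      apply le_of_lt
      apply hη y ?_ x ?_ (lt_of_lt_of_le hyx (min_le_left _ _))
      · simp only [mem_closedBall, dist_zero_right]
        calc ‖y‖ ≤ ‖x‖ + dist y x := by
                rw [dist_eq_norm]
                have h6 : y = x + (y - x) := by abel
                calc ‖y‖ = ‖x + (y - x)‖ := by rw [← h6]
                  _ ≤ ‖x‖ + ‖y - x‖ := norm_add_le _ _
          _ ≤ 1 + 1 := add_le_add hx (le_of_lt (lt_of_lt_of_le hyx (min_le_right _ _)))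
          _ = 2 := by norm_num
      · simp only [mem_closedBall, dist_zero_right]; linarith
    rwa [dist_eq_norm] at this
  -- rescaled smooth map
  set g2 : EuclideanSpace ℝ (Fin d) → EuclideanSpace ℝ (Fin d) :=
    fun x => (1 + ε)⁻¹ • h x with hg2
  have hg2smooth : ContDiff ℝ 1 g2 := hsmooth.const_smul _
  have hhle : ∀ x, ‖x‖ ≤ 1 → ‖h x‖ ≤ 1 + ε := by
    intro x hx
    calc ‖h x‖ ≤ ‖g x‖ + ‖h x - g x‖ := by
          have := norm_add_le (g x) (h x - g x); simpa [add_sub_cancel] using this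
      _ ≤ 1 + ε := add_le_add (hmap x hx) (happrox x hx)
  have hg2map : ∀ x, ‖x‖ ≤ 1 → ‖g2 x‖ ≤ 1 := by
    intro x hx
    rw [hg2]
    simp only [norm_smul, norm_inv, Real.norm_eq_abs, abs_of_pos (by linarith : (0:ℝ) < 1 + ε)]
    have h7 : ‖h x‖ ≤ 1 + ε := hhle x hx
    calc (1 + ε)⁻¹ * ‖h x‖ ≤ (1 + ε)⁻¹ * (1 + ε) :=
          mul_le_mul_of_nonneg_left h7 (by positivity)
      _ = 1 := by field_simp
  obtain ⟨x, hx1, hxfix⟩ := BrouwerAux.brouwer_smooth_aux g2 hg2smooth hg2map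
  -- contradiction
  have h1 : ‖h x - g2 x‖ ≤ ε := by
    rw [hg2]
    have : h x - (1 + ε)⁻¹ • h x = (1 - (1 + ε)⁻¹) • h x := by
      rw [sub_smul, one_smul]
    rw [this, norm_smul, Real.norm_eq_abs]
    have h2 : (0:ℝ) < 1 + ε := by linarith
    have h3 : (1:ℝ) - (1 + ε)⁻¹ = ε / (1 + ε) := by field_simp; ring
    rw [h3, abs_of_nonneg (by positivity)]
    calc ε / (1 + ε) * ‖h x‖ ≤ ε / (1 + ε) * (1 + ε) :=
          mul_le_mul_of_nonneg_left (hhle x hx1) (by positivity)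
      _ = ε := by field_simp
  have := hδle x hx1
  have hchain : ‖g x - x‖ ≤ ‖g x - h x‖ + ‖h x - g2 x‖ + ‖g2 x - x‖ := by
    have := norm_add_le (g x - h x + (h x - g2 x)) (g2 x - x)
    have h2 := norm_add_le (g x - h x) (h x - g2 x)
    calc ‖g x - x‖ = ‖g x - h x + (h x - g2 x) + (g2 x - x)‖ := by congr 1; abel
      _ ≤ ‖g x - h x + (h x - g2 x)‖ + ‖g2 x - x‖ := this
      _ ≤ ‖g x - h x‖ + ‖h x - g2 x‖ + ‖g2 x - x‖ := by linarith
  have h4 : ‖g x - h x‖ ≤ ε := by rw [norm_sub_rev]; exact happrox x hx1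
  have h5 : ‖g2 x - x‖ = 0 := by rw [hxfix]; simp
  rw [hε] at *
  linarith

-- projection existence
lemma proj_exists (Y : Set (EuclideanSpace ℝ (Fin d))) (hne : Y.Nonempty)
    (hc : IsClosed Y) (hconv : Convex ℝ Y) (u : EuclideanSpace ℝ (Fin d)) :
    ∃ v ∈ Y, ∀ w ∈ Y, ⟪u - v, w - v⟫ ≤ 0 := by
  obtain ⟨v, hv, hmin⟩ := exists_norm_eq_iInf_of_complete_convex hne hc.isComplete hconv u
  exact ⟨v, hv, (norm_eq_iInf_iff_real_inner_le_zero hconv hv).1 hmin⟩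

lemma proj_lip {Y : Set (EuclideanSpace ℝ (Fin d))} {u v pu pv : EuclideanSpace ℝ (Fin d)}
    (hpu : pu ∈ Y) (hpv : pv ∈ Y)
    (h1 : ∀ w ∈ Y, ⟪u - pu, w - pu⟫ ≤ 0) (h2 : ∀ w ∈ Y, ⟪v - pv, w - pv⟫ ≤ 0) :
    ‖pu - pv‖ ≤ ‖u - v‖ := by
  have ha := h1 pv hpv
  have hb := h2 pu hpu
  have key : ‖pu - pv‖ ^ 2 ≤ ⟪u - v, pu - pv⟫ := by
    have : ⟪u - v, pu - pv⟫ - ‖pu - pv‖ ^ 2 = (- ⟪u - pu, pv - pu⟫) + (- ⟪v - pv, pu - pv⟫) := by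
      rw [← real_inner_self_eq_norm_sq]
      rw [show pv - pu = -(pu - pv) by abel, inner_neg_right]
      ring_nf
      rw [← inner_sub_left, ← inner_sub_left]
      congr 1
      abel
    nlinarith [this]
  rcases eq_or_ne pu pv with h | h
  · simp [h]
  · have hpos : 0 < ‖pu - pv‖ := by
      simpa [sub_eq_zero] using norm_pos_iff.2 (sub_ne_zero.2 h)
    have := real_inner_le_norm (u - v) (pu - pv)
    nlinarith [key]

theorem VI_sol_nonempty_compact {d : ℕ}
    (M : EuclideanSpace ℝ (Fin d) → EuclideanSpace ℝ (Fin d))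
    (Y : Set (EuclideanSpace ℝ (Fin d)))
    (hYne : Y.Nonempty) (hYc : IsCompact Y) (hYconv : Convex ℝ Y)
    (hM : Continuous M) :
    ({y' ∈ Y | ∀ y ∈ Y, 0 ≤ ⟪M y', y - y'⟫}).Nonempty ∧
    IsCompact {y' ∈ Y | ∀ y ∈ Y, 0 ≤ ⟪M y', y - y'⟫} := by
  have hYcl : IsClosed Y := hYc.isClosed
  -- the projection map
  have hPe := fun u => proj_exists Y hYne hYcl hYconv u
  classical
  set p : EuclideanSpace ℝ (Fin d) → EuclideanSpace ℝ (Fin d) :=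
    fun u => Classical.choose (hPe u) with hp
  have hpY : ∀ u, p u ∈ Y := fun u => (Classical.choose_spec (hPe u)).1
  have hpI : ∀ u, ∀ w ∈ Y, ⟪u - p u, w - p u⟫ ≤ 0 :=
    fun u => (Classical.choose_spec (hPe u)).2
  have hpc : Continuous p := by
    apply LipschitzWith.continuous (K := 1)
    intro u v
    rw [edist_dist, edist_dist, dist_eq_norm, dist_eq_norm]
    have := proj_lip (hpY u) (hpY v) (hpI u) (hpI v)
    simpa using ENNReal.ofReal_le_ofReal this
  constructor
  · -- nonemptiness via Brouwer
    obtain ⟨R, hR0, hYR⟩ : ∃ R : ℝ, 0 < R ∧ Y ⊆ closedBall 0 R := by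
      obtain ⟨R, hR⟩ := hYc.isBounded.subset_closedBall 0
      exact ⟨max R 1, lt_of_lt_of_le one_pos (le_max_right _ _),
        hR.trans (closedBall_subset_closedBall (le_max_left _ _))⟩
    set F : EuclideanSpace ℝ (Fin d) → EuclideanSpace ℝ (Fin d) :=
      fun x => p (x - M x) with hF
    have hFc : Continuous F := hpc.comp (continuous_id.sub hM)
    have hFY : ∀ x, F x ∈ Y := fun x => hpY _
    set G : EuclideanSpace ℝ (Fin d) → EuclideanSpace ℝ (Fin d) :=
      fun x => R⁻¹ • F (R • x) with hG
    obtain ⟨x, _, hx⟩ : ∃ x, ‖x‖ ≤ 1 ∧ G x = x := by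
      apply brouwer_ball G (by show Continuous fun x => R⁻¹ • F (R • x); fun_prop)
      intro x _
      have := hYR (hFY (R • x))
      simp only [mem_closedBall, dist_zero_right] at this
      rw [hG]
      simp only [norm_smul, norm_inv, Real.norm_eq_abs, abs_of_pos hR0]
      rw [inv_mul_le_iff₀ hR0]
      simpa using this
    have hfix : F (R • x) = R • x := by
      have : R • G x = R • x := by rw [hx]
      rwa [hG, smul_inv_smul₀ hR0.ne'] at this
    set y := R • x with hy
    refine ⟨y, ?_, ?_⟩
    · rw [← hfix]; exact hFY _
    · intro z hz
      have h1 := hpI (y - M y) z hz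
      rw [show p (y - M y) = y from hfix] at h1
      have h2 : y - M y - y = -(M y) := by abel
      rw [h2, inner_neg_left] at h1
      linarith
  · -- compactness
    have : {y' ∈ Y | ∀ y ∈ Y, 0 ≤ ⟪M y', y - y'⟫} =
        Y ∩ ⋂ y ∈ Y, {y' | 0 ≤ ⟪M y', y - y'⟫} := by
      ext y'; simp [Set.mem_iInter]
    rw [this]
    apply hYc.inter_right
    apply isClosed_biInter
    intro y _
    have : Continuous fun y' => ⟪M y', y - y'⟫ :=
      Continuous.inner hM (continuous_const.sub continuous_id)
    exact isClosed_le continuous_const this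
end

section
/- Let (z_t), (b_t), (ξ_t), (ζ_t) be nonnegative random variables adapted to a filtration (F_t) with E[z_{t+1} | F_t] ≤ z_t(1 + b_t) + ξ_t − ζ_t, and suppose Σ b_t < ∞ and Σ ξ_t < ∞ almost surely. Then almost surely lim_{t→∞} z_t exists and is finite, and Σ ζ_t < ∞. -/
open MeasureTheory Filter Finset

theorem rs_core
    {Ω : Type*} {m0 : MeasurableSpace Ω} (μ : Measure Ω) [IsProbabilityMeasure μ]
    (ℱ : Filtration ℕ m0)
    (z b ξ ζ : ℕ → Ω → ℝ)
    (hz0 : ∀ t ω, 0 ≤ z t ω) (hb0 : ∀ t ω, 0 ≤ b t ω)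
    (hξ0 : ∀ t ω, 0 ≤ ξ t ω) (hζ0 : ∀ t ω, 0 ≤ ζ t ω)
    (hz_adapted : Adapted ℱ z) (hb_adapted : Adapted ℱ b)
    (hξ_adapted : Adapted ℱ ξ) (hζ_adapted : Adapted ℱ ζ)
    (hz_int : ∀ t, Integrable (z t) μ)
    (hξ_int : ∀ t, Integrable (ξ t) μ) (hζ_int : ∀ t, Integrable (ζ t) μ)
    (hrec : ∀ t, μ[z (t + 1) | ℱ t] ≤ᵐ[μ]
      fun ω => z t ω * (1 + b t ω) + ξ t ω - ζ t ω)
    (hb_sum : ∀ᵐ ω ∂μ, Summable (fun t => b t ω))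
    (hξ_sum : ∀ᵐ ω ∂μ, Summable (fun t => ξ t ω)) :
    ∀ᵐ ω ∂μ, (∃ l : ℝ, Tendsto (fun t => z t ω) atTop (nhds l)) ∧
      Summable (fun t => ζ t ω) := by
  -- the compounding factor
  set α : ℕ → Ω → ℝ := fun t ω => ∏ s ∈ Finset.range t, (1 + b s ω) with hα_def
  have hα_one : ∀ t ω, 1 ≤ α t ω := by
    intro t ω
    simp only [hα_def]
    calc (1:ℝ) = ∏ _s ∈ Finset.range t, 1 := by simp
    _ ≤ ∏ s ∈ Finset.range t, (1 + b s ω) :=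
      Finset.prod_le_prod (fun _ _ => zero_le_one) (fun s _ => by linarith [hb0 s ω])
  have hα_pos : ∀ t ω, 0 < α t ω := fun t ω => lt_of_lt_of_le one_pos (hα_one t ω)
  have hα_succ : ∀ t ω, α (t + 1) ω = α t ω * (1 + b t ω) := by
    intro t ω; simp only [hα_def]; exact Finset.prod_range_succ _ _
  have hα_sm : ∀ t, StronglyMeasurable[ℱ t] (α (t + 1)) := by
    intro t
    simp only [hα_def]
    refine Finset.stronglyMeasurable_fun_prod _ fun s hs => ?_
    have hs' : s ≤ t := Nat.lt_succ_iff.mp (Finset.mem_range.mp hs)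
    exact (stronglyMeasurable_const.add ((hb_adapted s).stronglyMeasurable.mono (ℱ.mono hs')))
  have hα_sm' : ∀ t, StronglyMeasurable[ℱ t] (α t) := by
    intro t
    simp only [hα_def]
    refine Finset.stronglyMeasurable_fun_prod _ fun s hs => ?_
    have hs' : s ≤ t := le_of_lt (Finset.mem_range.mp hs)
    exact (stronglyMeasurable_const.add ((hb_adapted s).stronglyMeasurable.mono (ℱ.mono hs')))
  -- normalized processes
  set z' : ℕ → Ω → ℝ := fun t ω => z t ω / α t ω with hz'_def
  set ξ' : ℕ → Ω → ℝ := fun t ω => ξ t ω / α (t + 1) ω with hξ'_def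
  set ζ' : ℕ → Ω → ℝ := fun t ω => ζ t ω / α (t + 1) ω with hζ'_def
  have hz'0 : ∀ t ω, 0 ≤ z' t ω := fun t ω => div_nonneg (hz0 t ω) (hα_pos t ω).le
  have hξ'0 : ∀ t ω, 0 ≤ ξ' t ω := fun t ω => div_nonneg (hξ0 t ω) (hα_pos _ ω).le
  have hζ'0 : ∀ t ω, 0 ≤ ζ' t ω := fun t ω => div_nonneg (hζ0 t ω) (hα_pos _ ω).le
  have hz'le : ∀ t ω, z' t ω ≤ z t ω := fun t ω => div_le_self (hz0 t ω) (hα_one t ω)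
  have hξ'le : ∀ t ω, ξ' t ω ≤ ξ t ω := fun t ω => div_le_self (hξ0 t ω) (hα_one _ ω)
  have hζ'le : ∀ t ω, ζ' t ω ≤ ζ t ω := fun t ω => div_le_self (hζ0 t ω) (hα_one _ ω)
  have hz'_sm : ∀ t, StronglyMeasurable[ℱ t] (z' t) :=
    fun t => ((hz_adapted t).div (hα_sm' t).measurable).stronglyMeasurable
  have hξ'_sm : ∀ t, StronglyMeasurable[ℱ t] (ξ' t) :=
    fun t => ((hξ_adapted t).div (hα_sm t).measurable).stronglyMeasurable
  have hζ'_sm : ∀ t, StronglyMeasurable[ℱ t] (ζ' t) :=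
    fun t => ((hζ_adapted t).div (hα_sm t).measurable).stronglyMeasurable
  have habs : ∀ (f g : Ω → ℝ), (∀ ω, 0 ≤ f ω) → (∀ ω, f ω ≤ g ω) →
      ∀ ω, ‖f ω‖ ≤ ‖g ω‖ := by
    intro f g h0 hle ω
    rw [Real.norm_eq_abs, Real.norm_eq_abs, abs_of_nonneg (h0 ω),
      abs_of_nonneg ((h0 ω).trans (hle ω))]
    exact hle ω
  have hz'_int : ∀ t, Integrable (z' t) μ := fun t =>
    (hz_int t).mono ((hz'_sm t).mono (ℱ.le t)).aestronglyMeasurable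
      (ae_of_all _ (habs _ _ (hz'0 t) (hz'le t)))
  have hξ'_int : ∀ t, Integrable (ξ' t) μ := fun t =>
    (hξ_int t).mono ((hξ'_sm t).mono (ℱ.le t)).aestronglyMeasurable
      (ae_of_all _ (habs _ _ (hξ'0 t) (hξ'le t)))
  have hζ'_int : ∀ t, Integrable (ζ' t) μ := fun t =>
    (hζ_int t).mono ((hζ'_sm t).mono (ℱ.le t)).aestronglyMeasurable
      (ae_of_all _ (habs _ _ (hζ'0 t) (hζ'le t)))
  -- the supermartingale candidate
  set X : ℕ → Ω → ℝ := fun t ω =>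
    z' t ω + ∑ s ∈ Finset.range t, ζ' s ω - ∑ s ∈ Finset.range t, ξ' s ω with hX_def
  set G : ℕ → Ω → ℝ := fun t ω => ∑ s ∈ Finset.range t, ξ s ω with hG_def
  have hX_sm : ∀ t, StronglyMeasurable[ℱ t] (X t) := by
    intro t
    simp only [hX_def]
    refine ((hz'_sm t).add ?_).sub ?_
    · exact Finset.stronglyMeasurable_fun_sum _ fun s hs =>
        (hζ'_sm s).mono (ℱ.mono (le_of_lt (Finset.mem_range.mp hs)))
    · exact Finset.stronglyMeasurable_fun_sum _ fun s hs =>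
        (hξ'_sm s).mono (ℱ.mono (le_of_lt (Finset.mem_range.mp hs)))
  have hX_int : ∀ t, Integrable (X t) μ := by
    intro t
    exact ((hz'_int t).add (integrable_finset_sum _ fun s _ => hζ'_int s)).sub
      (integrable_finset_sum _ fun s _ => hξ'_int s)
  have hG_mono : ∀ ω, Monotone fun t => G t ω := by
    intro ω
    apply monotone_nat_of_le_succ
    intro t
    simp only [hG_def, Finset.sum_range_succ]
    linarith [hξ0 t ω]
  have hG0 : ∀ t ω, 0 ≤ G t ω := fun t ω =>
    Finset.sum_nonneg fun s _ => hξ0 s ω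
  have hXlb : ∀ t ω, -(G t ω) ≤ X t ω := by
    intro t ω
    have h1 : ∑ s ∈ Finset.range t, ξ' s ω ≤ G t ω :=
      Finset.sum_le_sum fun s _ => hξ'le s ω
    have h2 : 0 ≤ ∑ s ∈ Finset.range t, ζ' s ω :=
      Finset.sum_nonneg fun s _ => hζ'0 s ω
    have := hz'0 t ω
    simp only [hX_def]
    linarith
  -- the one-step conditional expectation inequality
  have hcond : ∀ t, μ[X (t + 1) | ℱ t] ≤ᵐ[μ] X t := by
    intro t
    have hw_sm : StronglyMeasurable[ℱ t] (fun ω => (α (t + 1) ω)⁻¹) :=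
      ((hα_sm t).measurable.inv).stronglyMeasurable
    set C : Ω → ℝ := fun ω =>
      ∑ s ∈ Finset.range (t + 1), ζ' s ω - ∑ s ∈ Finset.range (t + 1), ξ' s ω with hC_def
    have hC_sm : StronglyMeasurable[ℱ t] C := by
      refine StronglyMeasurable.sub ?_ ?_
      · exact Finset.stronglyMeasurable_fun_sum _ fun s hs =>
          (hζ'_sm s).mono (ℱ.mono (Nat.lt_succ_iff.mp (Finset.mem_range.mp hs)))
      · exact Finset.stronglyMeasurable_fun_sum _ fun s hs =>
          (hξ'_sm s).mono (ℱ.mono (Nat.lt_succ_iff.mp (Finset.mem_range.mp hs)))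
    have hC_int : Integrable C μ :=
      (integrable_finset_sum _ fun s _ => hζ'_int s).sub
        (integrable_finset_sum _ fun s _ => hξ'_int s)
    have hprod_eq : (fun ω => (α (t + 1) ω)⁻¹ * z (t + 1) ω) = z' (t + 1) := by
      funext ω; simp only [hz'_def]; rw [inv_mul_eq_div]
    have hprod_int : Integrable (fun ω => (α (t + 1) ω)⁻¹ * z (t + 1) ω) μ := by
      rw [hprod_eq]; exact hz'_int _
    have hsplit : X (t + 1) = (fun ω => (α (t + 1) ω)⁻¹ * z (t + 1) ω) + C := by
      funext ω
      simp only [hX_def, hz'_def, hC_def, Pi.add_apply]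
      ring
    have h1 : μ[X (t + 1)|ℱ t] =ᵐ[μ]
        μ[(fun ω => (α (t + 1) ω)⁻¹ * z (t + 1) ω)|ℱ t] + μ[C|ℱ t] := by
      rw [hsplit]; exact condExp_add hprod_int hC_int _
    have h2 : μ[C|ℱ t] = C := condExp_of_stronglyMeasurable (ℱ.le t) hC_sm hC_int
    have hfg : (fun ω => (α (t + 1) ω)⁻¹ * z (t + 1) ω)
        = (fun ω => (α (t + 1) ω)⁻¹) * z (t + 1) := rfl
    have h3 : μ[(fun ω => (α (t + 1) ω)⁻¹ * z (t + 1) ω)|ℱ t]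
        =ᵐ[μ] fun ω => (α (t + 1) ω)⁻¹ * (μ[z (t + 1)|ℱ t]) ω := by
      rw [hfg]
      have := condExp_mul_of_stronglyMeasurable_left hw_sm (hfg ▸ hprod_int) (hz_int (t + 1))
      exact this
    have key : ∀ᵐ ω ∂μ, (α (t + 1) ω)⁻¹ * (μ[z (t + 1)|ℱ t]) ω + C ω ≤ X t ω := by
      filter_upwards [hrec t] with ω hω
      have hβ : 0 < 1 + b t ω := by linarith [hb0 t ω]
      have hA : 0 < α t ω := hα_pos t ω
      have h4 : (α (t + 1) ω)⁻¹ * (μ[z (t + 1)|ℱ t]) ω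
          ≤ (α (t + 1) ω)⁻¹ * (z t ω * (1 + b t ω) + ξ t ω - ζ t ω) :=
        mul_le_mul_of_nonneg_left hω (inv_nonneg.mpr (hα_pos _ ω).le)
      have h5 : (α (t + 1) ω)⁻¹ * (z t ω * (1 + b t ω) + ξ t ω - ζ t ω)
          = z' t ω + ξ' t ω - ζ' t ω := by
        simp only [hz'_def, hξ'_def, hζ'_def]
        rw [hα_succ]
        field_simp
      have h6 : C ω = (∑ s ∈ Finset.range t, ζ' s ω + ζ' t ω)
          - (∑ s ∈ Finset.range t, ξ' s ω + ξ' t ω) := by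
        simp only [hC_def, Finset.sum_range_succ]
      rw [h5] at h4
      rw [h6]
      simp only [hX_def]
      linarith
    filter_upwards [h1, h3, key] with ω hω1 hω3 hωkey
    rw [hω1, Pi.add_apply, hω3, h2]
    exact hωkey
  -- main localized convergence claim
  have hmain : ∀ K : ℕ, ∀ᵐ ω ∂μ, (∀ u, G (u + 1) ω ≤ (K : ℝ)) →
      ∃ c, Tendsto (fun t => X t ω) atTop (nhds c) := by
    intro K
    set S : ℕ → Set Ω := fun u => {ω | G (u + 1) ω ≤ (K : ℝ)} with hS_def
    have hG_sm : ∀ u, StronglyMeasurable[ℱ u] (G (u + 1)) := by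
      intro u
      simp only [hG_def]
      exact Finset.stronglyMeasurable_fun_sum _ fun s hs =>
        (hξ_adapted s).stronglyMeasurable.mono (ℱ.mono (Nat.lt_succ_iff.mp (Finset.mem_range.mp hs)))
    have hS_meas : ∀ u, MeasurableSet[ℱ u] (S u) := by
      intro u
      exact measurableSet_le (hG_sm u).measurable measurable_const
    set Y : ℕ → Ω → ℝ := fun t ω => X 0 ω +
      ∑ u ∈ Finset.range t, Set.indicator (S u) (fun ω' => X (u + 1) ω' - X u ω') ω
      with hY_def
    have hD_int : ∀ u, Integrable
        (Set.indicator (S u) (fun ω' => X (u + 1) ω' - X u ω')) μ := fun u =>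
      ((hX_int (u + 1)).sub (hX_int u)).indicator ((ℱ.le u) _ (hS_meas u))
    have hY_adapted : StronglyAdapted ℱ Y := by
      intro t
      simp only [hY_def]
      refine ((hX_sm 0).mono (ℱ.mono (Nat.zero_le t))).add ?_
      refine Finset.stronglyMeasurable_fun_sum _ fun u hu => ?_
      have hu' : u < t := Finset.mem_range.mp hu
      refine StronglyMeasurable.indicator ?_ (ℱ.mono hu'.le _ (hS_meas u))
      exact ((hX_sm (u + 1)).mono (ℱ.mono hu')).sub ((hX_sm u).mono (ℱ.mono hu'.le))
    have hY_int : ∀ t, Integrable (Y t) μ := by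
      intro t
      exact (hX_int 0).add (integrable_finset_sum _ fun u _ => hD_int u)
    have hYsucc : ∀ t, Y (t + 1) = Y t +
        Set.indicator (S t) (fun ω' => X (t + 1) ω' - X t ω') := by
      intro t
      funext ω
      simp only [hY_def, Finset.sum_range_succ, Pi.add_apply]
      ring
    have hY_super : Supermartingale Y ℱ μ := by
      refine supermartingale_nat hY_adapted hY_int fun t => ?_
      have h1 : μ[Y (t + 1)|ℱ t] =ᵐ[μ] μ[Y t|ℱ t] +
          μ[Set.indicator (S t) (fun ω' => X (t + 1) ω' - X t ω')|ℱ t] := by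
        rw [hYsucc t]; exact condExp_add (hY_int t) (hD_int t) _
      have h2 : μ[Y t|ℱ t] = Y t :=
        condExp_of_stronglyMeasurable (ℱ.le t) (hY_adapted t) (hY_int t)
      have h3 : μ[Set.indicator (S t) (fun ω' => X (t + 1) ω' - X t ω')|ℱ t]
          =ᵐ[μ] Set.indicator (S t) (μ[(fun ω' => X (t + 1) ω' - X t ω')|ℱ t]) :=
        condExp_indicator ((hX_int (t + 1)).sub (hX_int t)) (hS_meas t)
      have h4 : μ[(fun ω' => X (t + 1) ω' - X t ω')|ℱ t] ≤ᵐ[μ] 0 := by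
        have hsub : μ[(fun ω' => X (t + 1) ω' - X t ω')|ℱ t]
            =ᵐ[μ] μ[X (t + 1)|ℱ t] - μ[X t|ℱ t] :=
          condExp_sub (hX_int (t + 1)) (hX_int t) _
        have hXt : μ[X t|ℱ t] = X t :=
          condExp_of_stronglyMeasurable (ℱ.le t) (hX_sm t) (hX_int t)
        filter_upwards [hsub, hcond t] with ω hω1 hω2
        rw [Pi.zero_apply]
        rw [hω1, Pi.sub_apply, hXt]
        linarith
      filter_upwards [h1, h3, h4] with ω hω1 hω3 hω4
      rw [hω1, Pi.add_apply, hω3, h2]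
      have : Set.indicator (S t) (μ[(fun ω' => X (t + 1) ω' - X t ω')|ℱ t]) ω ≤ 0 := by
        by_cases hmem : ω ∈ S t
        · rw [Set.indicator_of_mem hmem]; exact hω4
        · rw [Set.indicator_of_notMem hmem]
      linarith
    have hGle : ∀ n (ω : Ω), (∀ u, u < n → G (u + 1) ω ≤ (K : ℝ)) → G n ω ≤ (K : ℝ) := by
      intro n ω h
      cases n with
      | zero => simp only [hG_def, Finset.range_zero, Finset.sum_empty]; positivity
      | succ m => exact h m (Nat.lt_succ_self m)
    have hY_eqX : ∀ (ω : Ω) t, (∀ u, u < t → G (u + 1) ω ≤ (K : ℝ)) → Y t ω = X t ω := by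
      intro ω t hc
      have : ∑ u ∈ Finset.range t, Set.indicator (S u)
          (fun ω' => X (u + 1) ω' - X u ω') ω
          = ∑ u ∈ Finset.range t, (X (u + 1) ω - X u ω) := by
        refine Finset.sum_congr rfl fun u hu => ?_
        exact Set.indicator_of_mem (show ω ∈ S u from hc u (Finset.mem_range.mp hu)) _
      simp only [hY_def]
      rw [this, Finset.sum_range_sub (fun u => X u ω)]
      ring
    have hY_lb : ∀ t ω, -(K : ℝ) ≤ Y t ω := by
      intro t ω
      by_cases hc : ∀ u, u < t → G (u + 1) ω ≤ (K : ℝ)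
      · rw [hY_eqX ω t hc]
        have := hXlb t ω
        have := hGle t ω hc
        linarith
      · push_neg at hc
        obtain ⟨u0, hu0t, hu0⟩ := hc
        have hex : ∃ u, (K : ℝ) < G (u + 1) ω := ⟨u0, hu0⟩
        set τ := Nat.find hex with hτ_def
        have hτspec : (K : ℝ) < G (τ + 1) ω := Nat.find_spec hex
        have hτt : τ < t := lt_of_le_of_lt (Nat.find_min' hex hu0) hu0t
        have hmin : ∀ u, u < τ → G (u + 1) ω ≤ (K : ℝ) := fun u hu =>
          not_lt.mp (Nat.find_min hex hu)
        have hsum : ∑ u ∈ Finset.range t, Set.indicator (S u)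
            (fun ω' => X (u + 1) ω' - X u ω') ω = X τ ω - X 0 ω := by
          rw [Finset.range_eq_Ico, ← Finset.sum_Ico_consecutive _ (Nat.zero_le τ) hτt.le]
          have hA : ∑ u ∈ Finset.Ico 0 τ, Set.indicator (S u)
              (fun ω' => X (u + 1) ω' - X u ω') ω = X τ ω - X 0 ω := by
            rw [← Finset.range_eq_Ico]
            have : ∑ u ∈ Finset.range τ, Set.indicator (S u)
                (fun ω' => X (u + 1) ω' - X u ω') ω
                = ∑ u ∈ Finset.range τ, (X (u + 1) ω - X u ω) :=
              Finset.sum_congr rfl fun u hu =>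
                Set.indicator_of_mem (show ω ∈ S u from hmin u (Finset.mem_range.mp hu)) _
            rw [this, Finset.sum_range_sub (fun u => X u ω)]
          have hB : ∑ u ∈ Finset.Ico τ t, Set.indicator (S u)
              (fun ω' => X (u + 1) ω' - X u ω') ω = 0 := by
            refine Finset.sum_eq_zero fun u hu => ?_
            have hτu : τ ≤ u := (Finset.mem_Ico.mp hu).1
            have : (K : ℝ) < G (u + 1) ω :=
              lt_of_lt_of_le hτspec (hG_mono ω (Nat.succ_le_succ hτu))
            exact Set.indicator_of_notMem (by simpa [hS_def] using not_le.mpr this) _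
          rw [hA, hB, add_zero]
        simp only [hY_def]
        rw [hsum]
        have h1 := hXlb τ ω
        have h2 : G τ ω ≤ (K : ℝ) := hGle τ ω hmin
        linarith
    -- L¹ boundedness
    have hY0 : Y 0 = X 0 := by
      funext ω; simp [hY_def]
    have hInt_le : ∀ t, ∫ ω, Y t ω ∂μ ≤ ∫ ω, X 0 ω ∂μ := by
      intro t
      have := hY_super.setIntegral_le (Nat.zero_le t)
        (MeasurableSet.univ : MeasurableSet[ℱ 0] Set.univ)
      rw [Measure.restrict_univ] at this
      rw [hY0] at this
      exact this
    have hbdd : ∀ t, eLpNorm (Y t) 1 μ ≤ ENNReal.ofReal ((∫ ω, X 0 ω ∂μ) + 2 * K) := by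
      intro t
      rw [eLpNorm_one_eq_lintegral_enorm,
        ← ofReal_integral_norm_eq_lintegral_enorm (hY_int t)]
      apply ENNReal.ofReal_le_ofReal
      have hK0 : (0 : ℝ) ≤ K := Nat.cast_nonneg K
      have step1 : ∫ ω, ‖Y t ω‖ ∂μ ≤ ∫ ω, (Y t ω + 2 * K) ∂μ := by
        refine integral_mono (hY_int t).norm ((hY_int t).add (integrable_const _)) ?_
        intro ω
        dsimp only
        rw [Real.norm_eq_abs]
        rcases abs_cases (Y t ω) with ⟨h, _⟩ | ⟨h, _⟩ <;>
          [linarith; linarith [hY_lb t ω]]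
      have step2 : ∫ ω, (Y t ω + 2 * K) ∂μ = (∫ ω, Y t ω ∂μ) + 2 * K := by
        rw [integral_add (hY_int t) (integrable_const _), integral_const]
        simp
      linarith [hInt_le t, step1, step2.le, step2.ge]
    have hconvY : ∀ᵐ ω ∂μ, ∃ c, Tendsto (fun t => Y t ω) atTop (nhds c) := by
      have hsub : Submartingale (-Y) ℱ μ := hY_super.neg
      have hbdd' : ∀ t, eLpNorm ((-Y) t) 1 μ ≤ ENNReal.ofReal ((∫ ω, X 0 ω ∂μ) + 2 * K) := by
        intro t
        have : (-Y) t = -(Y t) := rfl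
        rw [this, eLpNorm_neg]
        exact hbdd t
      filter_upwards [hsub.exists_ae_tendsto_of_bdd hbdd'] with ω hω
      obtain ⟨c, hc⟩ := hω
      refine ⟨-c, ?_⟩
      have := hc.neg
      simpa using this
    filter_upwards [hconvY] with ω hω hall
    obtain ⟨c, hc⟩ := hω
    exact ⟨c, hc.congr fun t => hY_eqX ω t fun u _ => hall u⟩
  filter_upwards [MeasureTheory.ae_all_iff.2 hmain, hb_sum, hξ_sum] with ω hmainω hbω hξω
  obtain ⟨K, hK⟩ := exists_nat_ge (∑' s, ξ s ω)
  have hGK : ∀ u, G (u + 1) ω ≤ (K : ℝ) := by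
    intro u
    refine le_trans ?_ hK
    simp only [hG_def]
    exact hξω.sum_le_tsum _ (fun s _ => hξ0 s ω)
  obtain ⟨c, hc⟩ := hmainω K hGK
  have hξ'sum : Summable fun s => ξ' s ω :=
    Summable.of_nonneg_of_le (fun s => hξ'0 s ω) (fun s => hξ'le s ω) hξω
  have hξ'conv : Tendsto (fun t => ∑ s ∈ Finset.range t, ξ' s ω) atTop
      (nhds (∑' s, ξ' s ω)) := hξ'sum.hasSum.tendsto_sum_nat
  have hU : Tendsto (fun t => z' t ω + ∑ s ∈ Finset.range t, ζ' s ω) atTop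
      (nhds (c + ∑' s, ξ' s ω)) := by
    have := hc.add hξ'conv
    refine this.congr fun t => ?_
    simp only [hX_def]
    ring
  obtain ⟨M, hM⟩ : BddAbove (Set.range fun t => z' t ω + ∑ s ∈ Finset.range t, ζ' s ω) :=
    hU.bddAbove_range
  have hζ'sum : Summable fun s => ζ' s ω := by
    refine summable_of_sum_range_le (c := M) (fun s => hζ'0 s ω) fun n => ?_
    have h1 : z' n ω + ∑ s ∈ Finset.range n, ζ' s ω ≤ M := hM (Set.mem_range_self n)
    linarith [hz'0 n ω]
  have hζ'conv : Tendsto (fun t => ∑ s ∈ Finset.range t, ζ' s ω) atTop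
      (nhds (∑' s, ζ' s ω)) := hζ'sum.hasSum.tendsto_sum_nat
  have hz'conv : Tendsto (fun t => z' t ω) atTop
      (nhds (c + ∑' s, ξ' s ω - ∑' s, ζ' s ω)) := by
    have := hU.sub hζ'conv
    refine this.congr fun t => ?_
    ring
  have hαmono : Monotone fun t => α t ω := by
    apply monotone_nat_of_le_succ
    intro t
    rw [hα_succ]
    nlinarith [hb0 t ω, hα_pos t ω]
  have hαbdd : BddAbove (Set.range fun t => α t ω) := by
    refine ⟨Real.exp (∑' s, b s ω), ?_⟩
    rintro x ⟨t, rfl⟩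
    calc α t ω ≤ ∏ s ∈ Finset.range t, Real.exp (b s ω) := by
          simp only [hα_def]
          refine Finset.prod_le_prod (fun s _ => by linarith [hb0 s ω]) fun s _ => ?_
          rw [add_comm]
          exact Real.add_one_le_exp (b s ω)
      _ = Real.exp (∑ s ∈ Finset.range t, b s ω) := by rw [← Real.exp_sum]
      _ ≤ Real.exp (∑' s, b s ω) :=
          Real.exp_le_exp.mpr (hbω.sum_le_tsum _ (fun s _ => hb0 s ω))
  have hαconv : Tendsto (fun t => α t ω) atTop (nhds (⨆ t, α t ω)) :=
    tendsto_atTop_ciSup hαmono hαbdd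
  have hαle : ∀ t, α t ω ≤ ⨆ t, α t ω := fun t => le_ciSup hαbdd t
  constructor
  · refine ⟨(c + ∑' s, ξ' s ω - ∑' s, ζ' s ω) * (⨆ t, α t ω), ?_⟩
    have := hz'conv.mul hαconv
    refine this.congr fun t => ?_
    simp only [hz'_def]
    rw [div_mul_cancel₀ _ (hα_pos t ω).ne']
  · refine Summable.of_nonneg_of_le (fun t => hζ0 t ω)
      (fun t => ?_) (hζ'sum.mul_right (⨆ t, α t ω))
    have h1 : ζ t ω = ζ' t ω * α (t + 1) ω := by
      simp only [hζ'_def]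
      rw [div_mul_cancel₀ _ (hα_pos (t + 1) ω).ne']
    rw [h1]
    exact mul_le_mul_of_nonneg_left (hαle (t + 1)) (hζ'0 t ω)

theorem robbins_siegmund
    {Ω : Type*} {m0 : MeasurableSpace Ω} (μ : Measure Ω) [IsProbabilityMeasure μ]
    (ℱ : Filtration ℕ m0)
    (z b ξ ζ : ℕ → Ω → ℝ)
    (hz_nonneg : ∀ t, 0 ≤ᵐ[μ] z t) (hb_nonneg : ∀ t, 0 ≤ᵐ[μ] b t)
    (hξ_nonneg : ∀ t, 0 ≤ᵐ[μ] ξ t) (hζ_nonneg : ∀ t, 0 ≤ᵐ[μ] ζ t)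
    (hz_adapted : Adapted ℱ z) (hb_adapted : Adapted ℱ b)
    (hξ_adapted : Adapted ℱ ξ) (hζ_adapted : Adapted ℱ ζ)
    (hz_int : ∀ t, Integrable (z t) μ) (hb_int : ∀ t, Integrable (b t) μ)
    (hξ_int : ∀ t, Integrable (ξ t) μ) (hζ_int : ∀ t, Integrable (ζ t) μ)
    (hrec : ∀ t, μ[z (t + 1) | ℱ t] ≤ᵐ[μ]
      fun ω => z t ω * (1 + b t ω) + ξ t ω - ζ t ω)
    (hb_sum : ∀ᵐ ω ∂μ, Summable (fun t => b t ω))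
    (hξ_sum : ∀ᵐ ω ∂μ, Summable (fun t => ξ t ω)) :
    ∀ᵐ ω ∂μ, (∃ l : ℝ, Tendsto (fun t => z t ω) atTop (nhds l)) ∧
      Summable (fun t => ζ t ω) := by
  classical
  set P : (ℕ → Ω → ℝ) → ℕ → Ω → ℝ := fun f t ω => max (f t ω) 0 with hP
  have hnn : ∀ f t (ω : Ω), 0 ≤ P f t ω := fun f t ω => le_max_right _ _
  have hadapted : ∀ f, Adapted ℱ f → Adapted ℱ (P f) := fun f hf t =>
    ((hf t).max (@measurable_const _ _ _ (ℱ t) _))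
  have hint : ∀ f, Adapted ℱ f → (∀ t, Integrable (f t) μ) →
      ∀ t, Integrable (P f t) μ := by
    intro f hf hfi t
    refine (hfi t).mono
      ((((hf t).max
        (@measurable_const _ _ _ (ℱ t) _)).stronglyMeasurable.mono
        (ℱ.le t))).aestronglyMeasurable
      (ae_of_all _ fun ω => ?_)
    rw [Real.norm_eq_abs, Real.norm_eq_abs, abs_of_nonneg (le_max_right _ _)]
    exact max_le (le_abs_self _) (abs_nonneg _)
  have heq : ∀ (f : ℕ → Ω → ℝ), (∀ t, 0 ≤ᵐ[μ] f t) → ∀ t, f t =ᵐ[μ] P f t := by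
    intro f hf t
    filter_upwards [hf t] with ω hω
    exact (max_eq_left hω).symm
  have hrec' : ∀ t, μ[P z (t + 1) | ℱ t] ≤ᵐ[μ]
      fun ω => P z t ω * (1 + P b t ω) + P ξ t ω - P ζ t ω := by
    intro t
    have h1 : μ[P z (t + 1)|ℱ t] =ᵐ[μ] μ[z (t + 1)|ℱ t] :=
      condExp_congr_ae (heq z hz_nonneg (t + 1)).symm
    filter_upwards [h1, hrec t, hz_nonneg t, hb_nonneg t, hξ_nonneg t, hζ_nonneg t]
      with ω e1 e2 e3 e4 e5 e6
    simp only [Pi.zero_apply] at e3 e4 e5 e6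
    rw [e1]
    simp only [hP]
    rw [max_eq_left e3, max_eq_left e4, max_eq_left e5, max_eq_left e6]
    exact e2
  have hb_sum' : ∀ᵐ ω ∂μ, Summable (fun t => P b t ω) := by
    filter_upwards [hb_sum, MeasureTheory.ae_all_iff.2 hb_nonneg] with ω h1 h2
    exact h1.congr fun t => (max_eq_left (by simpa using h2 t)).symm
  have hξ_sum' : ∀ᵐ ω ∂μ, Summable (fun t => P ξ t ω) := by
    filter_upwards [hξ_sum, MeasureTheory.ae_all_iff.2 hξ_nonneg] with ω h1 h2
    exact h1.congr fun t => (max_eq_left (by simpa using h2 t)).symm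
  have key := rs_core μ ℱ (P z) (P b) (P ξ) (P ζ)
    (hnn z) (hnn b) (hnn ξ) (hnn ζ)
    (hadapted z hz_adapted) (hadapted b hb_adapted)
    (hadapted ξ hξ_adapted) (hadapted ζ hζ_adapted)
    (hint z hz_adapted hz_int) (hint ξ hξ_adapted hξ_int) (hint ζ hζ_adapted hζ_int)
    hrec' hb_sum' hξ_sum'
  filter_upwards [key, MeasureTheory.ae_all_iff.2 hz_nonneg,
    MeasureTheory.ae_all_iff.2 hζ_nonneg] with ω h h2 h3
  constructor
  · obtain ⟨l, hl⟩ := h.1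
    exact ⟨l, hl.congr fun t => max_eq_left (by simpa using h2 t)⟩
  · exact h.2.congr fun t => max_eq_left (by simpa using h3 t)
end
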